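/- arXiv:2504.01926 — 3 statements merged into one kernel-verified Lean document; each statement's English description precedes it below -/
import Mathlib

section
/- Let R → S be a faithfully flat homomorphism of commutative rings of characteristic p. Then the induced ring homomorphism R^perf → S^perf between the perfections is also faithfully flat (i.e. S^perf is a faithfully flat module over R^perf via this map). -/
section PCAux

variable (K : Type) [CommRing K] (p : ℕ) [Fact p.Prime] [CharP K p]

lemma pc_shift (k n : ℕ) (r : K) :
    PerfectClosure.mk K p (n, r) = PerfectClosure.mk K p (k + n, (frobenius K p)^[k] r) :=
  PerfectClosure.R.sound K p k n r _ rfl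

lemma pc_mul_same (n : ℕ) (x y : K) :
    PerfectClosure.mk K p (n, x) * PerfectClosure.mk K p (n, y) =
      PerfectClosure.mk K p (n, x * y) := by
  rw [PerfectClosure.mk_mul_mk, pc_shift K p n n (x * y)]
  simp [iterate_frobenius, mul_pow]

lemma pc_add_same (n : ℕ) (x y : K) :
    PerfectClosure.mk K p (n, x) + PerfectClosure.mk K p (n, y) =
      PerfectClosure.mk K p (n, x + y) := by
  rw [PerfectClosure.mk_add_mk, pc_shift K p n n (x + y)]
  simp [iterate_frobenius, iterate_map_add]

/-- At a fixed stage `n`, `fun x => mk K p (n, x)` is a ring homomorphism. -/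
def pcMkHom (n : ℕ) : K →+* PerfectClosure K p where
  toFun x := PerfectClosure.mk K p (n, x)
  map_one' := by
    rw [PerfectClosure.one_def, pc_shift K p n 0 (1 : K)]
    simp
  map_mul' x y := (pc_mul_same K p n x y).symm
  map_zero' := PerfectClosure.mk_zero_right K p n
  map_add' x y := (pc_add_same K p n x y).symm

@[simp] lemma pcMkHom_apply (n : ℕ) (x : K) :
    pcMkHom K p n x = PerfectClosure.mk K p (n, x) := rfl

lemma pc_common_rep {ι : Type} [Fintype ι] (x : ι → PerfectClosure K p) (N0 : ℕ) :
    ∃ (N : ℕ) (r : ι → K), N0 ≤ N ∧ ∀ i, x i = PerfectClosure.mk K p (N, r i) := by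
  classical
  choose u hu using fun i => PerfectClosure.mk_surjective (K := K) (p := p) (x i)
  set N := max N0 (Finset.univ.sup fun i => (u i).1) with hN
  refine ⟨N, fun i => (frobenius K p)^[N - (u i).1] (u i).2, le_max_left _ _, fun i => ?_⟩
  have hle : (u i).1 ≤ N := by
    have h1 : (u i).1 ≤ Finset.univ.sup fun i => (u i).1 :=
      Finset.le_sup (f := fun i => (u i).1) (Finset.mem_univ i)
    exact le_trans h1 (le_max_right _ _)
  have := pc_shift K p (N - (u i).1) (u i).1 (u i).2
  rw [Nat.sub_add_cancel hle] at this
  rw [← hu i, ← this]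

variable (S : Type) [CommRing S] [CharP S p]

lemma pc_lift_mk (f : K →+* S) (n : ℕ) (r : K) :
    (PerfectClosure.lift K p (PerfectClosure S p)) ((PerfectClosure.of S p).comp f)
        (PerfectClosure.mk K p (n, r)) = PerfectClosure.mk S p (n, f r) := by
  apply (injective_frobenius (PerfectClosure S p) p).iterate n
  rw [← RingHom.map_iterate_frobenius, PerfectClosure.iterate_frobenius_mk,
    PerfectClosure.iterate_frobenius_mk]
  have h : (((PerfectClosure.lift K p (PerfectClosure S p))
        ((PerfectClosure.of S p).comp f)).comp (PerfectClosure.of K p)) r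
      = ((PerfectClosure.of S p).comp f) r := by
    rw [show (((PerfectClosure.lift K p (PerfectClosure S p))
        ((PerfectClosure.of S p).comp f)).comp (PerfectClosure.of K p))
      = (PerfectClosure.lift K p (PerfectClosure S p)).symm
          ((PerfectClosure.lift K p (PerfectClosure S p))
            ((PerfectClosure.of S p).comp f)) from rfl,
      Equiv.symm_apply_apply]
  simpa using h

end PCAux

set_option maxHeartbeats 1000000 in
/-- Let `R → S` be a faithfully flat homomorphism of commutative rings of
characteristic `p`.  Then the induced ring homomorphism `R^perf → S^perf` between the perfections
(perfect closures) is faithfully flat, i.e. `S^perf` is a faithfully flat `R^perf`-module via this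
map.  The induced map is the unique one commuting with the canonical maps, obtained by lifting
`R → S → S^perf` along `R → R^perf` using the universal property of the perfection. -/
theorem stmt_2 (p : ℕ) [Fact p.Prime] (e : ℕ) (he : 0 < e) (q : ℕ) (hq : q = p ^ e)
    (R : Type) [CommRing R] [CharP R p] (S : Type) [CommRing S] [CharP S p]
    (f : R →+* S)
    (hff : letI := f.toAlgebra; Module.FaithfullyFlat R S) :
    letI := ((PerfectClosure.lift R p (PerfectClosure S p))
      ((PerfectClosure.of S p).comp f)).toAlgebra
    Module.FaithfullyFlat (PerfectClosure R p) (PerfectClosure S p) := by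
  classical
  letI := f.toAlgebra
  have hff' : Module.FaithfullyFlat R S := hff
  haveI : Module.Flat R S := hff'.toFlat
  set g := (PerfectClosure.lift R p (PerfectClosure S p)) ((PerfectClosure.of S p).comp f)
    with hg
  letI : Algebra (PerfectClosure R p) (PerfectClosure S p) := g.toAlgebra
  have hsmul : ∀ (a : PerfectClosure R p) (x : PerfectClosure S p), a • x = g a * x :=
    fun a x => by rw [Algebra.smul_def, RingHom.algebraMap_toAlgebra]
  have hsmulS : ∀ (c : R) (s : S), c • s = f c * s :=
    fun c s => by rw [Algebra.smul_def, RingHom.algebraMap_toAlgebra]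
  have hppos : 0 < p := (Fact.out : p.Prime).pos
  -- Flatness via the equational criterion.
  have hflat : Module.Flat (PerfectClosure R p) (PerfectClosure S p) := by
    refine Module.Flat.of_forall_isTrivialRelation ?_
    intro ι a x h
    obtain ⟨N1, s1, -, hs1⟩ := pc_common_rep S p x 0
    obtain ⟨N, r, hN1N, hr⟩ := pc_common_rep R p a N1
    set s : Fin ι → S := fun i => (frobenius S p)^[N - N1] (s1 i) with hs
    have hx : ∀ i, x i = PerfectClosure.mk S p (N, s i) := fun i => by
      have := pc_shift S p (N - N1) N1 (s1 i)
      rw [Nat.sub_add_cancel hN1N] at this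
      rw [hs1 i, this]
    have hsum : PerfectClosure.mk S p (N, ∑ i, f (r i) * s i) = 0 := by
      calc PerfectClosure.mk S p (N, ∑ i, f (r i) * s i)
          = ∑ i, PerfectClosure.mk S p (N, f (r i) * s i) :=
            map_sum (pcMkHom S p N) _ _
        _ = ∑ i, a i • x i := Finset.sum_congr rfl fun i _ => by
            rw [hsmul, hr i, hx i, pc_lift_mk, pc_mul_same]
        _ = 0 := h
    rw [show (0 : PerfectClosure S p) = PerfectClosure.mk S p (0, 0) from
      (PerfectClosure.zero_def S p), PerfectClosure.mk_eq_iff] at hsum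
    obtain ⟨M0, hM⟩ := hsum
    simp only [zero_add] at hM
    set M := M0 with hMdef
    have hM' : (∑ i, f (r i) * s i) ^ p ^ M = 0 := by
      have h0 : (frobenius S p)^[N + M] (0 : S) = 0 := by
        rw [iterate_frobenius]
        exact zero_pow (by positivity)
      calc (∑ i, f (r i) * s i) ^ p ^ M
          = (frobenius S p)^[M] (∑ i, f (r i) * s i) := (iterate_frobenius _ _ _).symm
        _ = 0 := by rw [hM, h0]
    have hrel : ∑ i, (r i ^ p ^ M) • (s i ^ p ^ M) = (0 : S) := by
      calc ∑ i, (r i ^ p ^ M) • (s i ^ p ^ M)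
          = ∑ i, iterateFrobenius S p M (f (r i) * s i) :=
            Finset.sum_congr rfl fun i _ => by
              rw [iterateFrobenius_def, hsmulS, map_pow, mul_pow]
        _ = iterateFrobenius S p M (∑ i, f (r i) * s i) := (map_sum _ _ _).symm
        _ = 0 := by rw [iterateFrobenius_def, hM']
    obtain ⟨κ, b, t, hbt, hb⟩ :=
      Module.Flat.isTrivialRelation_of_sum_smul_eq_zero (R := R) (M := S) hrel
    refine ⟨κ, fun i j => PerfectClosure.mk R p (M + N, b i j),
      fun j => PerfectClosure.mk S p (M + N, t j), fun i => ?_, fun j => ?_⟩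
    · calc x i = PerfectClosure.mk S p (M + N, s i ^ p ^ M) := by
            rw [hx i, pc_shift S p M N (s i), iterate_frobenius]
        _ = PerfectClosure.mk S p (M + N, ∑ j, f (b i j) * t j) := by
            have hbti : s i ^ p ^ M = ∑ j, f (b i j) * t j := by
              simpa only [hsmulS] using hbt i
            rw [hbti]
        _ = ∑ j, PerfectClosure.mk S p (M + N, f (b i j) * t j) :=
            map_sum (pcMkHom S p (M + N)) _ _
        _ = ∑ j, PerfectClosure.mk R p (M + N, b i j) • PerfectClosure.mk S p (M + N, t j) :=
            Finset.sum_congr rfl fun j _ => by rw [hsmul, pc_lift_mk, pc_mul_same]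
    · calc ∑ i, a i * PerfectClosure.mk R p (M + N, b i j)
          = ∑ i, PerfectClosure.mk R p (M + N, r i ^ p ^ M * b i j) :=
            Finset.sum_congr rfl fun i _ => by
              rw [hr i, pc_shift R p M N (r i), iterate_frobenius, pc_mul_same]
        _ = PerfectClosure.mk R p (M + N, ∑ i, r i ^ p ^ M * b i j) :=
            (map_sum (pcMkHom R p (M + N)) _ _).symm
        _ = 0 := by
            have hbj : ∑ i, r i ^ p ^ M * b i j = 0 := by simpa only using hb j
            rw [hbj, PerfectClosure.mk_zero_right]
  show Module.FaithfullyFlat (PerfectClosure R p) (PerfectClosure S p)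
  refine (Module.faithfullyFlat_iff _ _).mpr ⟨hflat, ?_⟩
  intro m hm htop
  -- Extract a finite expression of 1 as an `m`-combination.
  have h1 : (1 : PerfectClosure S p) ∈
      m • (⊤ : Submodule (PerfectClosure R p) (PerfectClosure S p)) :=
    htop.symm ▸ Submodule.mem_top
  rw [show (⊤ : Submodule (PerfectClosure R p) (PerfectClosure S p)) =
      Submodule.span (PerfectClosure R p)
        (Set.range (id : PerfectClosure S p → PerfectClosure S p)) by
    rw [Set.range_id, Submodule.span_univ]] at h1
  obtain ⟨c, hc, hc1⟩ := (Submodule.mem_ideal_smul_span_iff_exists_sum m id 1).mp h1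
  rw [Finsupp.sum] at hc1
  have hc1' : ∑ z : c.support, c z • (z : PerfectClosure S p) = 1 := by
    rw [← hc1]
    exact Finset.sum_coe_sort c.support (fun z => c z • (id z : PerfectClosure S p))
  obtain ⟨N1, s1, -, hs1⟩ := pc_common_rep S p (fun z : c.support => (z : PerfectClosure S p)) 0
  obtain ⟨N, r, hN1N, hr⟩ := pc_common_rep R p (fun z : c.support => c z) N1
  set s : c.support → S := fun z => (frobenius S p)^[N - N1] (s1 z) with hs
  have hx : ∀ z : c.support, (z : PerfectClosure S p) = PerfectClosure.mk S p (N, s z) :=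
    fun z => by
      have := pc_shift S p (N - N1) N1 (s1 z)
      rw [Nat.sub_add_cancel hN1N] at this
      rw [hs1 z, this]
  have hone : PerfectClosure.mk S p (N, ∑ z : c.support, f (r z) * s z) =
      PerfectClosure.mk S p (N, 1) := by
    calc PerfectClosure.mk S p (N, ∑ z : c.support, f (r z) * s z)
        = ∑ z : c.support, PerfectClosure.mk S p (N, f (r z) * s z) :=
          map_sum (pcMkHom S p N) _ _
      _ = ∑ z : c.support, c z • (z : PerfectClosure S p) :=
          Finset.sum_congr rfl fun z _ => by
            rw [hsmul, hr z, hx z, pc_lift_mk, pc_mul_same]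
      _ = 1 := hc1'
      _ = PerfectClosure.mk S p (N, 1) := (map_one (pcMkHom S p N)).symm
  rw [PerfectClosure.mk_eq_iff] at hone
  obtain ⟨w, hw⟩ := hone
  have hw1 : (∑ z : c.support, f (r z) * s z) ^ p ^ (N + w) = 1 := by
    rw [← iterate_frobenius, hw, iterate_frobenius, one_pow]
  set M := N + w with hMdef
  have hrelS : ∑ z : c.support, f (r z ^ p ^ M) * s z ^ p ^ M = (1 : S) := by
    calc ∑ z : c.support, f (r z ^ p ^ M) * s z ^ p ^ M
        = ∑ z : c.support, iterateFrobenius S p M (f (r z) * s z) :=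
          Finset.sum_congr rfl fun z _ => by rw [iterateFrobenius_def, map_pow, mul_pow]
      _ = iterateFrobenius S p M (∑ z : c.support, f (r z) * s z) := (map_sum _ _ _).symm
      _ = 1 := by rw [iterateFrobenius_def, hw1]
  -- The ideal generated by the `r z ^ p ^ M` in `R` is the unit ideal.
  set I : Ideal R := Ideal.span (Set.range fun z : c.support => r z ^ p ^ M) with hI
  have hImap : I.map f = ⊤ := by
    rw [Ideal.eq_top_iff_one]
    rw [← hrelS]
    refine Ideal.sum_mem _ fun z _ => Ideal.mul_mem_right _ _ ?_
    exact Ideal.mem_map_of_mem f (Ideal.subset_span (Set.mem_range_self z))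
  have hIS : I • (⊤ : Submodule R S) = ⊤ := by
    rw [Ideal.smul_top_eq_map, RingHom.algebraMap_toAlgebra, hImap]
    rfl
  have hItop : I = ⊤ :=
    ((Module.FaithfullyFlat.iff_flat_and_ideal_smul_eq_top R S).mp hff').2 I hIS
  have h1I : (1 : R) ∈ I := hItop ▸ Submodule.mem_top
  rw [hI, Ideal.mem_span_range_iff_exists_fun] at h1I
  obtain ⟨cc, hcc⟩ := h1I
  -- Push the relation up to the perfect closure of `R`, landing in `m`.
  have h1m : (1 : PerfectClosure R p) ∈ m := by
    have happ := congrArg (PerfectClosure.of R p) hcc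
    rw [map_one, map_sum] at happ
    rw [← happ]
    refine Ideal.sum_mem _ fun z _ => ?_
    have hpow : PerfectClosure.of R p (cc z * r z ^ p ^ M)
        = PerfectClosure.of R p (cc z) * (c z) ^ (p ^ M * p ^ N) := by
      rw [map_mul]
      congr 1
      rw [hr z, PerfectClosure.mk_pow, PerfectClosure.of_apply,
        pc_shift R p N 0 (r z ^ p ^ M), iterate_frobenius, ← pow_mul]
      simp
    rw [hpow]
    exact Ideal.mul_mem_left _ _
      (Ideal.pow_mem_of_mem m (hc z) _ (Nat.pos_of_ne_zero (by positivity)))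
  exact hm.ne_top (Ideal.eq_top_iff_one m |>.mpr h1m)
end

section
/- In the ring R[τ,τ⁻¹] the following hold (writing ā for the image in R[τ,τ⁻¹] of a ∈ R): (1) for every a ∈ R and all integers i, j ≥ 0, one has σ^j·ā·τ^i = σ^{j+1}·(a^q)‾·τ^{i+1}; (2) every element of R[τ,τ⁻¹] can be written in the form σ^n·(ā₀ + ā₁τ + ⋯ + ā_m τ^m) for suitable natural numbers n, m and coefficients a₀, …, a_m ∈ R; (3) every nilpotent element of R is sent to 0 by the canonical map R → R[τ,τ⁻¹]. -/
/-! Construction of the twisted Laurent polynomial ring `R[τ,τ⁻¹]` as the quotient of the free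
noncommutative `𝔽`-algebra on the set `R ⊔ {τ, σ}` by the relations making the canonical map
`R → R[τ,τ⁻¹]` an `𝔽`-algebra homomorphism, together with `τ·a = a^q·τ`, `σ·a^q = a·σ` and
`τσ = στ = 1` for all `a ∈ R`. -/

namespace TwistedLaurent

/-- Generators: the elements of `R`, and the two formal variables `τ` and `σ`. -/
inductive Gen (R : Type) : Type
  | base : R → Gen R
  | tau : Gen R
  | sigma : Gen R

/-- The defining relations of `R[τ,τ⁻¹]`. -/
inductive Rel (q : ℕ) (𝔽 R : Type) [Field 𝔽] [CommRing R] [Algebra 𝔽 R] :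
    FreeAlgebra 𝔽 (Gen R) → FreeAlgebra 𝔽 (Gen R) → Prop
  | add (a b : R) : Rel q 𝔽 R (FreeAlgebra.ι 𝔽 (Gen.base (a + b)))
      (FreeAlgebra.ι 𝔽 (Gen.base a) + FreeAlgebra.ι 𝔽 (Gen.base b))
  | mul (a b : R) : Rel q 𝔽 R (FreeAlgebra.ι 𝔽 (Gen.base (a * b)))
      (FreeAlgebra.ι 𝔽 (Gen.base a) * FreeAlgebra.ι 𝔽 (Gen.base b))
  | algebra (c : 𝔽) : Rel q 𝔽 R (FreeAlgebra.ι 𝔽 (Gen.base (algebraMap 𝔽 R c)))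
      (algebraMap 𝔽 (FreeAlgebra 𝔽 (Gen R)) c)
  | tau_comm (a : R) : Rel q 𝔽 R (FreeAlgebra.ι 𝔽 Gen.tau * FreeAlgebra.ι 𝔽 (Gen.base a))
      (FreeAlgebra.ι 𝔽 (Gen.base (a ^ q)) * FreeAlgebra.ι 𝔽 Gen.tau)
  | sigma_comm (a : R) : Rel q 𝔽 R (FreeAlgebra.ι 𝔽 Gen.sigma * FreeAlgebra.ι 𝔽 (Gen.base (a ^ q)))
      (FreeAlgebra.ι 𝔽 (Gen.base a) * FreeAlgebra.ι 𝔽 Gen.sigma)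
  | tau_sigma : Rel q 𝔽 R (FreeAlgebra.ι 𝔽 Gen.tau * FreeAlgebra.ι 𝔽 Gen.sigma) 1
  | sigma_tau : Rel q 𝔽 R (FreeAlgebra.ι 𝔽 Gen.sigma * FreeAlgebra.ι 𝔽 Gen.tau) 1

variable (q : ℕ) (𝔽 R : Type) [Field 𝔽] [CommRing R] [Algebra 𝔽 R]

/-- The twisted Laurent polynomial ring `R[τ,τ⁻¹]`. -/
def Ring' : Type := RingQuot (Rel q 𝔽 R)

noncomputable instance : Ring (Ring' q 𝔽 R) :=
  inferInstanceAs (Ring (RingQuot (Rel q 𝔽 R)))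

/-- The canonical map `R → R[τ,τ⁻¹]`. -/
noncomputable def ι : R → Ring' q 𝔽 R :=
  fun a => RingQuot.mkAlgHom 𝔽 (Rel q 𝔽 R) (FreeAlgebra.ι 𝔽 (Gen.base a))

/-- The element `τ` of `R[τ,τ⁻¹]`. -/
noncomputable def T : Ring' q 𝔽 R :=
  RingQuot.mkAlgHom 𝔽 (Rel q 𝔽 R) (FreeAlgebra.ι 𝔽 Gen.tau)

/-- The element `σ` of `R[τ,τ⁻¹]`. -/
noncomputable def S : Ring' q 𝔽 R :=
  RingQuot.mkAlgHom 𝔽 (Rel q 𝔽 R) (FreeAlgebra.ι 𝔽 Gen.sigma)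

end TwistedLaurent

namespace TwistedLaurentAux

open TwistedLaurent

variable (q : ℕ) (𝔽 R : Type) [Field 𝔽] [CommRing R] [Algebra 𝔽 R]

lemma ι_add (a b : R) : ι q 𝔽 R (a + b) = ι q 𝔽 R a + ι q 𝔽 R b := by
  have h := RingQuot.mkAlgHom_rel 𝔽 (Rel.add (q := q) (𝔽 := 𝔽) a b)
  simp only [map_add] at h; exact h

lemma ι_mul (a b : R) : ι q 𝔽 R (a * b) = ι q 𝔽 R a * ι q 𝔽 R b := by
  have h := RingQuot.mkAlgHom_rel 𝔽 (Rel.mul (q := q) (𝔽 := 𝔽) a b)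
  simp only [map_mul] at h; exact h

lemma ι_zero : ι q 𝔽 R 0 = 0 := by
  have h := ι_add q 𝔽 R 0 0
  rw [add_zero] at h
  exact (left_eq_add.mp h)

lemma ι_one : ι q 𝔽 R 1 = 1 := by
  have h := RingQuot.mkAlgHom_rel 𝔽 (Rel.algebra (q := q) (R := R) (1 : 𝔽))
  simp only [map_one] at h; exact h

lemma tau_comm (a : R) : T q 𝔽 R * ι q 𝔽 R a = ι q 𝔽 R (a ^ q) * T q 𝔽 R := by
  have h := RingQuot.mkAlgHom_rel 𝔽 (Rel.tau_comm (q := q) (𝔽 := 𝔽) a)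
  simp only [map_mul] at h; exact h

lemma sigma_comm (a : R) : S q 𝔽 R * ι q 𝔽 R (a ^ q) = ι q 𝔽 R a * S q 𝔽 R := by
  have h := RingQuot.mkAlgHom_rel 𝔽 (Rel.sigma_comm (q := q) (𝔽 := 𝔽) a)
  simp only [map_mul] at h; exact h

lemma TS : T q 𝔽 R * S q 𝔽 R = 1 := by
  have h := RingQuot.mkAlgHom_rel 𝔽 (Rel.tau_sigma (q := q) (𝔽 := 𝔽) (R := R))
  simp only [map_mul, map_one] at h; exact h

lemma ST : S q 𝔽 R * T q 𝔽 R = 1 := by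
  have h := RingQuot.mkAlgHom_rel 𝔽 (Rel.sigma_tau (q := q) (𝔽 := 𝔽) (R := R))
  simp only [map_mul, map_one] at h; exact h

lemma ι_expand (a : R) : ι q 𝔽 R a = S q 𝔽 R * ι q 𝔽 R (a ^ q) * T q 𝔽 R := by
  rw [sigma_comm, mul_assoc, ST, mul_one]

lemma ι_expand_pow (a : R) (k : ℕ) :
    ι q 𝔽 R a = S q 𝔽 R ^ k * ι q 𝔽 R (a ^ q ^ k) * T q 𝔽 R ^ k := by
  induction k with
  | zero => simp
  | succ k ih =>
    rw [pow_succ (S q 𝔽 R), pow_succ' (T q 𝔽 R), pow_succ q, pow_mul, ih]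
    conv_lhs => rw [ι_expand q 𝔽 R (a ^ q ^ k)]
    simp only [mul_assoc]


lemma tau_pow_comm (a : R) (i : ℕ) :
    T q 𝔽 R ^ i * ι q 𝔽 R a = ι q 𝔽 R (a ^ q ^ i) * T q 𝔽 R ^ i := by
  induction i generalizing a with
  | zero => simp
  | succ i ih =>
    rw [pow_succ (T q 𝔽 R), mul_assoc, tau_comm, ← mul_assoc, ih (a ^ q), ← pow_mul,
      ← pow_succ' q, mul_assoc]

lemma Spow_Tpow (k : ℕ) : S q 𝔽 R ^ k * T q 𝔽 R ^ k = 1 := by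
  induction k with
  | zero => simp
  | succ k ih =>
    rw [pow_succ (S q 𝔽 R), pow_succ' (T q 𝔽 R), mul_assoc, ← mul_assoc (S q 𝔽 R), ST,
      one_mul, ih]

lemma Tpow_succ_S (i : ℕ) : T q 𝔽 R ^ (i + 1) * S q 𝔽 R = T q 𝔽 R ^ i := by
  rw [pow_succ, mul_assoc, TS, mul_one]

lemma term_S (a : R) (i : ℕ) :
    ι q 𝔽 R a * T q 𝔽 R ^ i * S q 𝔽 R = S q 𝔽 R * (ι q 𝔽 R (a ^ q) * T q 𝔽 R ^ i) := by
  conv_lhs => rw [ι_expand q 𝔽 R a]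
  rw [mul_assoc (S q 𝔽 R * ι q 𝔽 R (a ^ q)), ← pow_succ' (T q 𝔽 R), mul_assoc, Tpow_succ_S,
    mul_assoc]

/-- Polynomial in `T` with coefficients from `R`. -/
noncomputable def Poly (m : ℕ) (c : ℕ → R) : Ring' q 𝔽 R :=
  ∑ i ∈ Finset.range (m + 1), ι q 𝔽 R (c i) * T q 𝔽 R ^ i

/-- "is a polynomial in `T`". -/
def IsPoly (x : Ring' q 𝔽 R) : Prop := ∃ m c, x = Poly q 𝔽 R m c

lemma isPoly_single (a : R) (k : ℕ) : IsPoly q 𝔽 R (ι q 𝔽 R a * T q 𝔽 R ^ k) := by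
  refine ⟨k, fun i => if i = k then a else 0, ?_⟩
  rw [Poly, Finset.sum_eq_single_of_mem k (Finset.self_mem_range_succ k)]
  · simp
  · intro i _ hik
    simp [hik, ι_zero]

lemma isPoly_zero : IsPoly q 𝔽 R 0 := by
  simpa [ι_zero] using isPoly_single q 𝔽 R 0 0

lemma poly_pad (m m' : ℕ) (h : m ≤ m') (c : ℕ → R) :
    Poly q 𝔽 R m' (fun i => if i ≤ m then c i else 0) = Poly q 𝔽 R m c := by
  have hsub : Finset.range (m + 1) ⊆ Finset.range (m' + 1) := Finset.range_subset_range.mpr (by omega)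
  have hz : ∀ i ∈ Finset.range (m' + 1), i ∉ Finset.range (m + 1) →
      ι q 𝔽 R (if i ≤ m then c i else 0) * T q 𝔽 R ^ i = 0 := by
    intro i _ hi
    have hile : ¬ i ≤ m := by
      simp only [Finset.mem_range, Nat.lt_succ_iff] at hi
      omega
    simp [hile, ι_zero]
  rw [Poly, Poly, ← Finset.sum_subset hsub hz]
  refine Finset.sum_congr rfl fun i hi => ?_
  have : i ≤ m := Nat.lt_succ_iff.mp (Finset.mem_range.mp hi)
  simp [this]

lemma isPoly_add {x y : Ring' q 𝔽 R} (hx : IsPoly q 𝔽 R x) (hy : IsPoly q 𝔽 R y) :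
    IsPoly q 𝔽 R (x + y) := by
  obtain ⟨m1, c1, rfl⟩ := hx
  obtain ⟨m2, c2, rfl⟩ := hy
  set M := max m1 m2 with hM
  refine ⟨M, fun i => (if i ≤ m1 then c1 i else 0) + (if i ≤ m2 then c2 i else 0), ?_⟩
  rw [← poly_pad q 𝔽 R m1 M (le_max_left _ _) c1, ← poly_pad q 𝔽 R m2 M (le_max_right _ _) c2,
    Poly, Poly, Poly, ← Finset.sum_add_distrib]
  refine Finset.sum_congr rfl fun i _ => ?_
  rw [ι_add, add_mul]

lemma isPoly_sum {α : Type} (s : Finset α) (f : α → Ring' q 𝔽 R)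
    (h : ∀ a ∈ s, IsPoly q 𝔽 R (f a)) : IsPoly q 𝔽 R (∑ a ∈ s, f a) := by
  classical
  induction s using Finset.induction_on with
  | empty => simpa using isPoly_zero q 𝔽 R
  | insert _ _ hni ih =>
    rw [Finset.sum_insert hni]
    exact isPoly_add q 𝔽 R (h _ (Finset.mem_insert_self _ _))
      (ih fun a ha => h a (Finset.mem_insert_of_mem ha))

lemma isPoly_mul {x y : Ring' q 𝔽 R} (hx : IsPoly q 𝔽 R x) (hy : IsPoly q 𝔽 R y) :
    IsPoly q 𝔽 R (x * y) := by
  obtain ⟨m1, c1, rfl⟩ := hx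
  obtain ⟨m2, c2, rfl⟩ := hy
  rw [Poly, Poly, Finset.sum_mul_sum]
  refine isPoly_sum q 𝔽 R _ _ fun i _ => isPoly_sum q 𝔽 R _ _ fun j _ => ?_
  have : ι q 𝔽 R (c1 i) * T q 𝔽 R ^ i * (ι q 𝔽 R (c2 j) * T q 𝔽 R ^ j)
      = ι q 𝔽 R (c1 i * c2 j ^ q ^ i) * T q 𝔽 R ^ (i + j) := by
    rw [mul_assoc, ← mul_assoc (T q 𝔽 R ^ i), tau_pow_comm, ι_mul, mul_assoc, ← pow_add,
      mul_assoc]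
  rw [this]
  exact isPoly_single q 𝔽 R _ _

lemma isPoly_T_mul {x : Ring' q 𝔽 R} (hx : IsPoly q 𝔽 R x) : IsPoly q 𝔽 R (T q 𝔽 R * x) := by
  obtain ⟨m, c, rfl⟩ := hx
  rw [Poly, Finset.mul_sum]
  refine isPoly_sum q 𝔽 R _ _ fun i _ => ?_
  have : T q 𝔽 R * (ι q 𝔽 R (c i) * T q 𝔽 R ^ i)
      = ι q 𝔽 R (c i ^ q) * T q 𝔽 R ^ (i + 1) := by
    rw [← mul_assoc, tau_comm, mul_assoc, ← pow_succ' (T q 𝔽 R)]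
  rw [this]
  exact isPoly_single q 𝔽 R _ _

lemma isPoly_Tpow_mul {x : Ring' q 𝔽 R} (hx : IsPoly q 𝔽 R x) (k : ℕ) :
    IsPoly q 𝔽 R (T q 𝔽 R ^ k * x) := by
  induction k with
  | zero => simpa using hx
  | succ k ih =>
    rw [pow_succ' (T q 𝔽 R), mul_assoc]
    exact isPoly_T_mul q 𝔽 R ih

lemma isPoly_mul_S {x : Ring' q 𝔽 R} (hx : IsPoly q 𝔽 R x) :
    ∃ y, IsPoly q 𝔽 R y ∧ x * S q 𝔽 R = S q 𝔽 R * y := by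
  obtain ⟨m, c, rfl⟩ := hx
  refine ⟨Poly q 𝔽 R m (fun i => c i ^ q), ⟨m, _, rfl⟩, ?_⟩
  rw [Poly, Poly, Finset.sum_mul, Finset.mul_sum]
  exact Finset.sum_congr rfl fun i _ => term_S q 𝔽 R (c i) i

lemma isPoly_mul_Spow {x : Ring' q 𝔽 R} (hx : IsPoly q 𝔽 R x) (k : ℕ) :
    ∃ y, IsPoly q 𝔽 R y ∧ x * S q 𝔽 R ^ k = S q 𝔽 R ^ k * y := by
  induction k with
  | zero => exact ⟨x, hx, by simp⟩
  | succ k ih =>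
    obtain ⟨y, hy, hxy⟩ := ih
    obtain ⟨z, hz, hyz⟩ := isPoly_mul_S q 𝔽 R hy
    refine ⟨z, hz, ?_⟩
    rw [pow_succ (S q 𝔽 R), ← mul_assoc, hxy, mul_assoc, hyz, ← mul_assoc]

/-- "can be written as `σ^n * polynomial`". -/
def Rep (x : Ring' q 𝔽 R) : Prop :=
  ∃ n y, IsPoly q 𝔽 R y ∧ x = S q 𝔽 R ^ n * y

lemma rep_lift {x : Ring' q 𝔽 R} {n N : ℕ} {y : Ring' q 𝔽 R}
    (hy : IsPoly q 𝔽 R y) (hx : x = S q 𝔽 R ^ n * y) (hnN : n ≤ N) :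
    ∃ z, IsPoly q 𝔽 R z ∧ x = S q 𝔽 R ^ N * z := by
  obtain ⟨k, rfl⟩ : ∃ k, N = n + k := ⟨N - n, by omega⟩
  refine ⟨T q 𝔽 R ^ k * y, isPoly_Tpow_mul q 𝔽 R hy _, ?_⟩
  have hS : S q 𝔽 R ^ (n + k) * T q 𝔽 R ^ k = S q 𝔽 R ^ n := by
    rw [pow_add, mul_assoc, Spow_Tpow, mul_one]
  rw [hx, ← mul_assoc, hS]

lemma rep_add {x y : Ring' q 𝔽 R} (hx : Rep q 𝔽 R x) (hy : Rep q 𝔽 R y) :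
    Rep q 𝔽 R (x + y) := by
  obtain ⟨n1, y1, hy1, rfl⟩ := hx
  obtain ⟨n2, y2, hy2, rfl⟩ := hy
  obtain ⟨z1, hz1, he1⟩ := rep_lift q 𝔽 R hy1 rfl (le_max_left n1 n2)
  obtain ⟨z2, hz2, he2⟩ := rep_lift q 𝔽 R hy2 rfl (le_max_right n1 n2)
  exact ⟨max n1 n2, z1 + z2, isPoly_add q 𝔽 R hz1 hz2, by rw [he1, he2, mul_add]⟩

lemma rep_mul {x y : Ring' q 𝔽 R} (hx : Rep q 𝔽 R x) (hy : Rep q 𝔽 R y) :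
    Rep q 𝔽 R (x * y) := by
  obtain ⟨n1, y1, hy1, rfl⟩ := hx
  obtain ⟨n2, y2, hy2, rfl⟩ := hy
  obtain ⟨z, hz, hzz⟩ := isPoly_mul_Spow q 𝔽 R hy1 n2
  refine ⟨n1 + n2, z * y2, isPoly_mul q 𝔽 R hz hy2, ?_⟩
  rw [pow_add, mul_assoc (S q 𝔽 R ^ n1) y1, ← mul_assoc y1, hzz]
  simp only [mul_assoc]

lemma rep_ι (a : R) : Rep q 𝔽 R (ι q 𝔽 R a) := by
  refine ⟨0, ι q 𝔽 R a, ?_, by rw [pow_zero, one_mul]⟩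
  have := isPoly_single q 𝔽 R a 0
  simpa using this

lemma rep_T : Rep q 𝔽 R (T q 𝔽 R) := by
  refine ⟨0, T q 𝔽 R, ?_, by rw [pow_zero, one_mul]⟩
  have := isPoly_single q 𝔽 R (1 : R) 1
  simpa [ι_one] using this

lemma rep_S : Rep q 𝔽 R (S q 𝔽 R) := by
  refine ⟨1, 1, ?_, by rw [pow_one, mul_one]⟩
  have := isPoly_single q 𝔽 R (1 : R) 0
  simpa [ι_one] using this

lemma rep_one : Rep q 𝔽 R 1 := by
  refine ⟨0, 1, ?_, by rw [pow_zero, one_mul]⟩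
  have := isPoly_single q 𝔽 R (1 : R) 0
  simpa [ι_one] using this

lemma rep_all (x : Ring' q 𝔽 R) : Rep q 𝔽 R x := by
  obtain ⟨y, rfl⟩ := RingQuot.mkAlgHom_surjective 𝔽 (Rel q 𝔽 R) x
  induction y using FreeAlgebra.induction with
  | grade0 c =>
    have h : (RingQuot.mkAlgHom 𝔽 (Rel q 𝔽 R)) (algebraMap 𝔽 (FreeAlgebra 𝔽 (Gen R)) c)
        = ι q 𝔽 R (algebraMap 𝔽 R c) :=
      (RingQuot.mkAlgHom_rel 𝔽 (Rel.algebra (q := q) c)).symm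
    rw [h]
    exact rep_ι q 𝔽 R _
  | grade1 g =>
    cases g with
    | base a => exact rep_ι q 𝔽 R a
    | tau => exact rep_T q 𝔽 R
    | sigma => exact rep_S q 𝔽 R
  | mul a b ha hb => rw [map_mul]; exact rep_mul q 𝔽 R ha hb
  | add a b ha hb => rw [map_add]; exact rep_add q 𝔽 R ha hb

end TwistedLaurentAux


open TwistedLaurent in
/-- Let `𝔽` be the finite field with `q` elements (`q` a power of a prime `p`)
and `R` a commutative `𝔽`-algebra.  In the ring `R[τ,τ⁻¹]`: (1) for every `a ∈ R` and all
`i, j ≥ 0` one has `σ^j·ā·τ^i = σ^(j+1)·(a^q)‾·τ^(i+1)`; (2) every element can be written as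
`σ^n·(ā₀ + ā₁τ + ⋯ + ā_m τ^m)` for suitable `n, m ∈ ℕ` and coefficients `a₀, …, a_m ∈ R`;
(3) every nilpotent element of `R` is sent to `0` by the canonical map `R → R[τ,τ⁻¹]`. -/
theorem stmt_3 (p : ℕ) (hp : p.Prime) (e : ℕ) (he : 0 < e) (q : ℕ) (hq : q = p ^ e)
    (𝔽 : Type) [Field 𝔽] [Fintype 𝔽] (hcard : Fintype.card 𝔽 = q)
    (R : Type) [CommRing R] [Algebra 𝔽 R] :
    (∀ (a : R) (i j : ℕ),
        S q 𝔽 R ^ j * ι q 𝔽 R a * T q 𝔽 R ^ i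
          = S q 𝔽 R ^ (j + 1) * ι q 𝔽 R (a ^ q) * T q 𝔽 R ^ (i + 1)) ∧
    (∀ x : Ring' q 𝔽 R, ∃ (n m : ℕ) (c : ℕ → R),
        x = S q 𝔽 R ^ n * ∑ i ∈ Finset.range (m + 1), ι q 𝔽 R (c i) * T q 𝔽 R ^ i) ∧
    (∀ a : R, IsNilpotent a → ι q 𝔽 R a = 0) := by
  refine ⟨?_, ?_, ?_⟩
  · intro a i j
    conv_lhs => rw [TwistedLaurentAux.ι_expand q 𝔽 R a]
    rw [pow_succ (S q 𝔽 R), pow_succ' (T q 𝔽 R)]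
    simp only [mul_assoc]
  · intro x
    obtain ⟨n, y, ⟨m, c, rfl⟩, hx⟩ := TwistedLaurentAux.rep_all q 𝔽 R x
    exact ⟨n, m, c, hx⟩
  · rintro a ⟨n, hn⟩
    have hq2 : 2 ≤ q := hq ▸ hp.two_le.trans (Nat.le_self_pow (by omega) p)
    have hle : n ≤ q ^ n := le_of_lt (Nat.lt_pow_self (n := n) (by omega))
    have h0 : a ^ q ^ n = 0 := by
      have h : a ^ q ^ n = a ^ n * a ^ (q ^ n - n) := by
        rw [← pow_add]
        congr 1
        omega
      rw [h, hn, zero_mul]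
    rw [TwistedLaurentAux.ι_expand_pow q 𝔽 R a n, h0, TwistedLaurentAux.ι_zero, mul_zero,
      zero_mul]
end

section
/- The canonical ring homomorphism R[τ,τ⁻¹] → R^perf[τ,τ⁻¹], induced by the canonical map R → R^perf (and sending τ to τ and σ to σ), is bijective, i.e. an isomorphism of rings. -/
/-! Construction of the twisted Laurent polynomial ring `R[τ,τ⁻¹]` as the quotient of the free
noncommutative `𝔽`-algebra on the set `R ⊔ {τ, σ}` by the relations making the canonical map
`R → R[τ,τ⁻¹]` an `𝔽`-algebra homomorphism, together with `τ·a = a^q·τ`, `σ·a^q = a·σ` and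
`τσ = στ = 1` for all `a ∈ R`. -/

namespace TwistedLaurent

variable (q : ℕ) (𝔽 R : Type) [Field 𝔽] [CommRing R] [Algebra 𝔽 R]

noncomputable instance : Algebra 𝔽 (Ring' q 𝔽 R) :=
  inferInstanceAs (Algebra 𝔽 (RingQuot (Rel q 𝔽 R)))

variable {q 𝔽 R}

lemma iota_add (a b : R) : ι q 𝔽 R (a + b) = ι q 𝔽 R a + ι q 𝔽 R b := by
  show RingQuot.mkAlgHom 𝔽 (Rel q 𝔽 R) _ = _
  rw [RingQuot.mkAlgHom_rel 𝔽 (Rel.add a b), map_add]; rfl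

lemma iota_mul (a b : R) : ι q 𝔽 R (a * b) = ι q 𝔽 R a * ι q 𝔽 R b := by
  show RingQuot.mkAlgHom 𝔽 (Rel q 𝔽 R) _ = _
  rw [RingQuot.mkAlgHom_rel 𝔽 (Rel.mul a b), map_mul]; rfl

lemma iota_algebraMap (c : 𝔽) :
    ι q 𝔽 R (algebraMap 𝔽 R c) = algebraMap 𝔽 (Ring' q 𝔽 R) c := by
  show RingQuot.mkAlgHom 𝔽 (Rel q 𝔽 R) _ = _
  rw [RingQuot.mkAlgHom_rel 𝔽 (Rel.algebra c), AlgHom.commutes]; rfl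

lemma iota_one : ι q 𝔽 R 1 = 1 := by
  have := iota_algebraMap (q := q) (R := R) (1 : 𝔽)
  rwa [map_one, map_one] at this

lemma iota_pow (a : R) (k : ℕ) : ι q 𝔽 R (a ^ k) = (ι q 𝔽 R a) ^ k := by
  induction k with
  | zero => simpa using iota_one
  | succ n ih => rw [pow_succ, pow_succ, iota_mul, ih]

lemma T_iota (a : R) : T q 𝔽 R * ι q 𝔽 R a = ι q 𝔽 R (a ^ q) * T q 𝔽 R := by
  show RingQuot.mkAlgHom 𝔽 (Rel q 𝔽 R) _ * RingQuot.mkAlgHom 𝔽 (Rel q 𝔽 R) _ = _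
  rw [← map_mul, RingQuot.mkAlgHom_rel 𝔽 (Rel.tau_comm a), map_mul]; rfl

lemma S_iota (a : R) : S q 𝔽 R * ι q 𝔽 R (a ^ q) = ι q 𝔽 R a * S q 𝔽 R := by
  show RingQuot.mkAlgHom 𝔽 (Rel q 𝔽 R) _ * RingQuot.mkAlgHom 𝔽 (Rel q 𝔽 R) _ = _
  rw [← map_mul, RingQuot.mkAlgHom_rel 𝔽 (Rel.sigma_comm a), map_mul]; rfl

lemma T_S : T q 𝔽 R * S q 𝔽 R = 1 := by
  show RingQuot.mkAlgHom 𝔽 (Rel q 𝔽 R) _ * RingQuot.mkAlgHom 𝔽 (Rel q 𝔽 R) _ = _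
  rw [← map_mul, RingQuot.mkAlgHom_rel 𝔽 (Rel.tau_sigma), map_one]; rfl

lemma S_T : S q 𝔽 R * T q 𝔽 R = 1 := by
  show RingQuot.mkAlgHom 𝔽 (Rel q 𝔽 R) _ * RingQuot.mkAlgHom 𝔽 (Rel q 𝔽 R) _ = _
  rw [← map_mul, RingQuot.mkAlgHom_rel 𝔽 (Rel.sigma_tau), map_one]; rfl

lemma Tpow_Spow (n : ℕ) : (T q 𝔽 R) ^ n * (S q 𝔽 R) ^ n = 1 := by
  induction n with
  | zero => simp
  | succ k ih =>
    rw [pow_succ, pow_succ']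
    calc (T q 𝔽 R) ^ k * T q 𝔽 R * (S q 𝔽 R * (S q 𝔽 R) ^ k)
        = (T q 𝔽 R) ^ k * (T q 𝔽 R * S q 𝔽 R) * (S q 𝔽 R) ^ k := by
          simp only [mul_assoc]
      _ = 1 := by rw [T_S, mul_one, ih]

lemma Spow_Tpow (n : ℕ) : (S q 𝔽 R) ^ n * (T q 𝔽 R) ^ n = 1 := by
  induction n with
  | zero => simp
  | succ k ih =>
    rw [pow_succ, pow_succ']
    calc (S q 𝔽 R) ^ k * S q 𝔽 R * (T q 𝔽 R * (T q 𝔽 R) ^ k)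
        = (S q 𝔽 R) ^ k * (S q 𝔽 R * T q 𝔽 R) * (T q 𝔽 R) ^ k := by
          simp only [mul_assoc]
      _ = 1 := by rw [S_T, mul_one, ih]

variable (q 𝔽 R) in
/-- `ψ n a = σⁿ · a · τⁿ`. -/
noncomputable def psi (n : ℕ) (a : R) : Ring' q 𝔽 R :=
  (S q 𝔽 R) ^ n * ι q 𝔽 R a * (T q 𝔽 R) ^ n

lemma psi_zero (a : R) : psi q 𝔽 R 0 a = ι q 𝔽 R a := by
  simp [psi]

lemma psi_succ (n : ℕ) (a : R) :
    psi q 𝔽 R (n + 1) a = (S q 𝔽 R) ^ n * (S q 𝔽 R * ι q 𝔽 R a * T q 𝔽 R) * (T q 𝔽 R) ^ n := by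
  rw [psi, pow_succ, pow_succ']; simp only [mul_assoc]

lemma psi_succ' (n : ℕ) (a : R) :
    psi q 𝔽 R (n + 1) a = S q 𝔽 R * psi q 𝔽 R n a * T q 𝔽 R := by
  rw [psi, pow_succ', pow_succ]; simp only [psi, mul_assoc]

lemma S_iota_T (a : R) : S q 𝔽 R * ι q 𝔽 R (a ^ q) * T q 𝔽 R = ι q 𝔽 R a := by
  rw [S_iota, mul_assoc, S_T, mul_one]

lemma psi_succ_q (n : ℕ) (a : R) : psi q 𝔽 R (n + 1) (a ^ q) = psi q 𝔽 R n a := by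
  rw [psi_succ, S_iota_T]; rfl

lemma psi_mul (n : ℕ) (a b : R) :
    psi q 𝔽 R n a * psi q 𝔽 R n b = psi q 𝔽 R n (a * b) := by
  simp only [psi, mul_assoc]
  rw [← mul_assoc ((T q 𝔽 R) ^ n) ((S q 𝔽 R) ^ n), Tpow_Spow, one_mul,
    ← mul_assoc (ι q 𝔽 R a) (ι q 𝔽 R b), ← iota_mul]

lemma psi_add (n : ℕ) (a b : R) :
    psi q 𝔽 R n a + psi q 𝔽 R n b = psi q 𝔽 R n (a + b) := by
  simp only [psi, iota_add, mul_add, add_mul]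

lemma psi_one (n : ℕ) : psi q 𝔽 R n 1 = 1 := by
  rw [psi, iota_one, mul_one, Spow_Tpow]

lemma psi_pow (n k : ℕ) (a : R) : psi q 𝔽 R n (a ^ k) = (psi q 𝔽 R n a) ^ k := by
  induction k with
  | zero => simpa using psi_one n
  | succ m ih => rw [pow_succ, pow_succ, ← psi_mul, ih]

lemma T_psi (n : ℕ) (a : R) :
    T q 𝔽 R * psi q 𝔽 R n a = psi q 𝔽 R n (a ^ q) * T q 𝔽 R := by
  induction n generalizing a with
  | zero => rw [psi_zero, psi_zero, T_iota]
  | succ k ih =>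
    rw [psi_succ', psi_succ']
    calc T q 𝔽 R * (S q 𝔽 R * psi q 𝔽 R k a * T q 𝔽 R)
        = (T q 𝔽 R * S q 𝔽 R) * (psi q 𝔽 R k a * T q 𝔽 R) := by simp only [mul_assoc]
      _ = psi q 𝔽 R k a * T q 𝔽 R := by rw [T_S, one_mul]
      _ = (S q 𝔽 R * T q 𝔽 R) * (psi q 𝔽 R k a * T q 𝔽 R) := by rw [S_T, one_mul]
      _ = S q 𝔽 R * (T q 𝔽 R * psi q 𝔽 R k a) * T q 𝔽 R := by simp only [mul_assoc]
      _ = S q 𝔽 R * (psi q 𝔽 R k (a ^ q) * T q 𝔽 R) * T q 𝔽 R := by rw [ih]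
      _ = S q 𝔽 R * psi q 𝔽 R k (a ^ q) * T q 𝔽 R * T q 𝔽 R := by simp only [mul_assoc]

lemma S_psi (n : ℕ) (a : R) :
    S q 𝔽 R * psi q 𝔽 R n (a ^ q) = psi q 𝔽 R n a * S q 𝔽 R := by
  induction n generalizing a with
  | zero => rw [psi_zero, psi_zero, S_iota]
  | succ k ih =>
    rw [psi_succ', psi_succ']
    calc S q 𝔽 R * (S q 𝔽 R * psi q 𝔽 R k (a ^ q) * T q 𝔽 R)
        = S q 𝔽 R * ((S q 𝔽 R * psi q 𝔽 R k (a ^ q)) * T q 𝔽 R) := by simp only [mul_assoc]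
      _ = S q 𝔽 R * ((psi q 𝔽 R k a * S q 𝔽 R) * T q 𝔽 R) := by rw [ih]
      _ = S q 𝔽 R * (psi q 𝔽 R k a * (S q 𝔽 R * T q 𝔽 R)) := by simp only [mul_assoc]
      _ = S q 𝔽 R * psi q 𝔽 R k a := by rw [S_T, mul_one]
      _ = S q 𝔽 R * psi q 𝔽 R k a * (T q 𝔽 R * S q 𝔽 R) := by rw [T_S, mul_one]
      _ = S q 𝔽 R * psi q 𝔽 R k a * T q 𝔽 R * S q 𝔽 R := by simp only [mul_assoc]

lemma psi_level (n k : ℕ) (a : R) :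
    psi q 𝔽 R (n + k) (a ^ q ^ k) = psi q 𝔽 R n a := by
  induction k with
  | zero => simp
  | succ m ih =>
    have : a ^ q ^ (m + 1) = (a ^ q ^ m) ^ q := by
      rw [← pow_mul, pow_succ]
    rw [show n + (m + 1) = (n + m) + 1 from rfl, this, psi_succ_q, ih]

lemma psi_iota (k : ℕ) (a : R) : psi q 𝔽 R k (a ^ q ^ k) = ι q 𝔽 R a := by
  have := psi_level (q := q) (𝔽 := 𝔽) (R := R) 0 k a
  rwa [zero_add, psi_zero] at this

section Perf

variable (p d : ℕ) [Fact p.Prime] [CharP R p]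

lemma mk_shift (k m : ℕ) (y : R) :
    PerfectClosure.mk R p (m + k, y ^ p ^ k) = PerfectClosure.mk R p (m, y) := by
  induction k with
  | zero => simp
  | succ j ih =>
    rw [show m + (j + 1) = (m + j) + 1 from rfl, pow_succ, pow_mul,
      PerfectClosure.mk_succ_pow, ih]

variable (𝔽) in
/-- The inverse map on coefficients: `x^(1/pⁿ) ↦ σⁿ · x^(p^(dn)) · τⁿ`. -/
noncomputable def phi : PerfectClosure R p → Ring' (p ^ (d + 1)) 𝔽 R :=
  fun u => PerfectClosure.liftOn u
    (fun nx => psi (p ^ (d + 1)) 𝔽 R nx.1 (nx.2 ^ p ^ (d * nx.1)))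
    (by
      rintro _ _ ⟨n, x⟩
      show psi _ 𝔽 R n (x ^ p ^ (d * n)) =
        psi _ 𝔽 R (n + 1) ((frobenius R p x) ^ p ^ (d * (n + 1)))
      have h1 : (frobenius R p x) ^ p ^ (d * (n + 1)) =
          (x ^ p ^ (d * n)) ^ p ^ (d + 1) := by
        simp only [frobenius_def, ← pow_mul, ← pow_succ', ← pow_add]
        congr 2
        try ring
      rw [h1, psi_succ_q])

lemma phi_mk (n : ℕ) (x : R) :
    phi 𝔽 p d (PerfectClosure.mk R p (n, x)) =
      psi (p ^ (d + 1)) 𝔽 R n (x ^ p ^ (d * n)) := rfl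

lemma phi_of (a : R) : phi 𝔽 p d (PerfectClosure.of R p a) = ι (p ^ (d + 1)) 𝔽 R a := by
  rw [PerfectClosure.of_apply, phi_mk, Nat.mul_zero, pow_zero, pow_one, psi_zero]

lemma phi_mul (u v : PerfectClosure R p) :
    phi 𝔽 p d (u * v) = phi 𝔽 p d u * phi 𝔽 p d v := by
  obtain ⟨⟨n, x⟩, rfl⟩ := PerfectClosure.mk_surjective R p u
  obtain ⟨⟨m, y⟩, rfl⟩ := PerfectClosure.mk_surjective R p v
  rw [PerfectClosure.mk_mul_mk]
  show psi _ 𝔽 R (n + m) (((frobenius R p)^[m] x * (frobenius R p)^[n] y) ^ p ^ (d * (n + m)))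
    = psi _ 𝔽 R n (x ^ p ^ (d * n)) * psi _ 𝔽 R m (y ^ p ^ (d * m))
  have e1 : ((frobenius R p)^[m] x) ^ p ^ (d * (n + m)) =
      (x ^ p ^ (d * n)) ^ (p ^ (d + 1)) ^ m := by
    simp only [iterate_frobenius, ← pow_mul, ← pow_add]
    congr 2
    try ring
  have e2 : ((frobenius R p)^[n] y) ^ p ^ (d * (n + m)) =
      (y ^ p ^ (d * m)) ^ (p ^ (d + 1)) ^ n := by
    simp only [iterate_frobenius, ← pow_mul, ← pow_add]
    congr 2
    try ring
  rw [mul_pow, e1, e2, ← psi_mul]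
  congr 1
  · exact psi_level n m _
  · rw [add_comm n m]; exact psi_level m n _

lemma phi_add (u v : PerfectClosure R p) :
    phi 𝔽 p d (u + v) = phi 𝔽 p d u + phi 𝔽 p d v := by
  obtain ⟨⟨n, x⟩, rfl⟩ := PerfectClosure.mk_surjective R p u
  obtain ⟨⟨m, y⟩, rfl⟩ := PerfectClosure.mk_surjective R p v
  rw [PerfectClosure.mk_add_mk]
  show psi _ 𝔽 R (n + m) (((frobenius R p)^[m] x + (frobenius R p)^[n] y) ^ p ^ (d * (n + m)))
    = psi _ 𝔽 R n (x ^ p ^ (d * n)) + psi _ 𝔽 R m (y ^ p ^ (d * m))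
  have e1 : ((frobenius R p)^[m] x) ^ p ^ (d * (n + m)) =
      (x ^ p ^ (d * n)) ^ (p ^ (d + 1)) ^ m := by
    simp only [iterate_frobenius, ← pow_mul, ← pow_add]
    congr 2
    try ring
  have e2 : ((frobenius R p)^[n] y) ^ p ^ (d * (n + m)) =
      (y ^ p ^ (d * m)) ^ (p ^ (d + 1)) ^ n := by
    simp only [iterate_frobenius, ← pow_mul, ← pow_add]
    congr 2
    try ring
  rw [add_pow_char_pow, e1, e2, ← psi_add]
  congr 1
  · exact psi_level n m _
  · rw [add_comm n m]; exact psi_level m n _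

lemma T_phi (a : PerfectClosure R p) :
    T (p ^ (d + 1)) 𝔽 R * phi 𝔽 p d a =
      phi 𝔽 p d (a ^ p ^ (d + 1)) * T (p ^ (d + 1)) 𝔽 R := by
  obtain ⟨⟨n, x⟩, rfl⟩ := PerfectClosure.mk_surjective R p a
  rw [PerfectClosure.mk_pow]
  show _ = psi _ 𝔽 R n ((x ^ p ^ (d + 1)) ^ p ^ (d * n)) * _
  have h1 : (x ^ p ^ (d + 1)) ^ p ^ (d * n) = (x ^ p ^ (d * n)) ^ p ^ (d + 1) := by
    rw [← pow_mul, ← pow_mul, mul_comm]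
  rw [h1, phi_mk, T_psi]

lemma S_phi (a : PerfectClosure R p) :
    S (p ^ (d + 1)) 𝔽 R * phi 𝔽 p d (a ^ p ^ (d + 1)) =
      phi 𝔽 p d a * S (p ^ (d + 1)) 𝔽 R := by
  obtain ⟨⟨n, x⟩, rfl⟩ := PerfectClosure.mk_surjective R p a
  rw [PerfectClosure.mk_pow]
  show S (p ^ (d + 1)) 𝔽 R * psi _ 𝔽 R n ((x ^ p ^ (d + 1)) ^ p ^ (d * n)) = _
  have h1 : (x ^ p ^ (d + 1)) ^ p ^ (d * n) = (x ^ p ^ (d * n)) ^ p ^ (d + 1) := by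
    rw [← pow_mul, ← pow_mul, mul_comm]
  rw [h1, phi_mk, S_psi]

variable (𝔽 R)
variable [Algebra 𝔽 (PerfectClosure R p)]

/-- Images of the generators under the canonical map. -/
noncomputable def fG : Gen R → Ring' (p ^ (d + 1)) 𝔽 (PerfectClosure R p)
  | .base a => ι (p ^ (d + 1)) 𝔽 (PerfectClosure R p) (PerfectClosure.of R p a)
  | .tau => T (p ^ (d + 1)) 𝔽 (PerfectClosure R p)
  | .sigma => S (p ^ (d + 1)) 𝔽 (PerfectClosure R p)

/-- Images of the generators under the inverse map. -/
noncomputable def fH : Gen (PerfectClosure R p) → Ring' (p ^ (d + 1)) 𝔽 R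
  | .base a => phi 𝔽 p d a
  | .tau => T (p ^ (d + 1)) 𝔽 R
  | .sigma => S (p ^ (d + 1)) 𝔽 R

lemma g_rel
    (halg : ∀ c : 𝔽, algebraMap 𝔽 (PerfectClosure R p) c
      = PerfectClosure.of R p (algebraMap 𝔽 R c)) :
    ∀ ⦃x y⦄, Rel (p ^ (d + 1)) 𝔽 R x y →
      FreeAlgebra.lift 𝔽 (fG 𝔽 R p d) x = FreeAlgebra.lift 𝔽 (fG 𝔽 R p d) y := by
  intro x y h
  induction h with
  | add a b =>
    simp only [map_add, FreeAlgebra.lift_ι_apply, fG]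
    exact iota_add _ _
  | mul a b =>
    simp only [map_mul, FreeAlgebra.lift_ι_apply, fG]
    exact iota_mul _ _
  | algebra c =>
    simp only [FreeAlgebra.lift_ι_apply, AlgHom.commutes, fG]
    rw [← halg c, iota_algebraMap]
  | tau_comm a =>
    simp only [map_mul, FreeAlgebra.lift_ι_apply, fG]
    rw [map_pow]
    exact T_iota _
  | sigma_comm a =>
    simp only [map_mul, FreeAlgebra.lift_ι_apply, fG]
    rw [map_pow]
    exact S_iota _
  | tau_sigma =>
    simp only [map_mul, map_one, FreeAlgebra.lift_ι_apply, fG]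
    exact T_S
  | sigma_tau =>
    simp only [map_mul, map_one, FreeAlgebra.lift_ι_apply, fG]
    exact S_T

lemma h_rel
    (halg : ∀ c : 𝔽, algebraMap 𝔽 (PerfectClosure R p) c
      = PerfectClosure.of R p (algebraMap 𝔽 R c)) :
    ∀ ⦃x y⦄, Rel (p ^ (d + 1)) 𝔽 (PerfectClosure R p) x y →
      FreeAlgebra.lift 𝔽 (fH 𝔽 R p d) x = FreeAlgebra.lift 𝔽 (fH 𝔽 R p d) y := by
  intro x y h
  induction h with
  | add a b =>
    simp only [map_add, FreeAlgebra.lift_ι_apply, fH]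
    exact phi_add p d a b
  | mul a b =>
    simp only [map_mul, FreeAlgebra.lift_ι_apply, fH]
    exact phi_mul p d a b
  | algebra c =>
    simp only [FreeAlgebra.lift_ι_apply, AlgHom.commutes, fH]
    rw [halg c, phi_of p d, iota_algebraMap]
  | tau_comm a =>
    simp only [map_mul, FreeAlgebra.lift_ι_apply, fH]
    exact T_phi p d a
  | sigma_comm a =>
    simp only [map_mul, FreeAlgebra.lift_ι_apply, fH]
    exact S_phi p d a
  | tau_sigma =>
    simp only [map_mul, map_one, FreeAlgebra.lift_ι_apply, fH]
    exact T_S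
  | sigma_tau =>
    simp only [map_mul, map_one, FreeAlgebra.lift_ι_apply, fH]
    exact S_T

/-- The canonical algebra homomorphism `R[τ,τ⁻¹] → R^perf[τ,τ⁻¹]`. -/
noncomputable def gAlg
    (halg : ∀ c : 𝔽, algebraMap 𝔽 (PerfectClosure R p) c
      = PerfectClosure.of R p (algebraMap 𝔽 R c)) :
    Ring' (p ^ (d + 1)) 𝔽 R →ₐ[𝔽] Ring' (p ^ (d + 1)) 𝔽 (PerfectClosure R p) :=
  RingQuot.liftAlgHom 𝔽 ⟨FreeAlgebra.lift 𝔽 (fG 𝔽 R p d), g_rel 𝔽 R p d halg⟩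

/-- The inverse algebra homomorphism `R^perf[τ,τ⁻¹] → R[τ,τ⁻¹]`. -/
noncomputable def hAlg
    (halg : ∀ c : 𝔽, algebraMap 𝔽 (PerfectClosure R p) c
      = PerfectClosure.of R p (algebraMap 𝔽 R c)) :
    Ring' (p ^ (d + 1)) 𝔽 (PerfectClosure R p) →ₐ[𝔽] Ring' (p ^ (d + 1)) 𝔽 R :=
  RingQuot.liftAlgHom 𝔽 ⟨FreeAlgebra.lift 𝔽 (fH 𝔽 R p d), h_rel 𝔽 R p d halg⟩

variable {𝔽 R}
variable (halg : ∀ c : 𝔽, algebraMap 𝔽 (PerfectClosure R p) c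
      = PerfectClosure.of R p (algebraMap 𝔽 R c))

lemma gAlg_iota (a : R) :
    gAlg 𝔽 R p d halg (ι (p ^ (d + 1)) 𝔽 R a)
      = ι (p ^ (d + 1)) 𝔽 (PerfectClosure R p) (PerfectClosure.of R p a) := by
  exact (RingQuot.liftAlgHom_mkAlgHom_apply 𝔽 (FreeAlgebra.lift 𝔽 (fG 𝔽 R p d))
    (g_rel 𝔽 R p d halg) _).trans (FreeAlgebra.lift_ι_apply _ _)

lemma gAlg_T : gAlg 𝔽 R p d halg (T (p ^ (d + 1)) 𝔽 R)
    = T (p ^ (d + 1)) 𝔽 (PerfectClosure R p) := by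
  exact (RingQuot.liftAlgHom_mkAlgHom_apply 𝔽 (FreeAlgebra.lift 𝔽 (fG 𝔽 R p d))
    (g_rel 𝔽 R p d halg) _).trans (FreeAlgebra.lift_ι_apply _ _)

lemma gAlg_S : gAlg 𝔽 R p d halg (S (p ^ (d + 1)) 𝔽 R)
    = S (p ^ (d + 1)) 𝔽 (PerfectClosure R p) := by
  exact (RingQuot.liftAlgHom_mkAlgHom_apply 𝔽 (FreeAlgebra.lift 𝔽 (fG 𝔽 R p d))
    (g_rel 𝔽 R p d halg) _).trans (FreeAlgebra.lift_ι_apply _ _)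

lemma hAlg_iota (b : PerfectClosure R p) :
    hAlg 𝔽 R p d halg (ι (p ^ (d + 1)) 𝔽 (PerfectClosure R p) b) = phi 𝔽 p d b := by
  exact (RingQuot.liftAlgHom_mkAlgHom_apply 𝔽 (FreeAlgebra.lift 𝔽 (fH 𝔽 R p d))
    (h_rel 𝔽 R p d halg) _).trans (FreeAlgebra.lift_ι_apply _ _)

lemma hAlg_T : hAlg 𝔽 R p d halg (T (p ^ (d + 1)) 𝔽 (PerfectClosure R p))
    = T (p ^ (d + 1)) 𝔽 R := by
  exact (RingQuot.liftAlgHom_mkAlgHom_apply 𝔽 (FreeAlgebra.lift 𝔽 (fH 𝔽 R p d))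
    (h_rel 𝔽 R p d halg) _).trans (FreeAlgebra.lift_ι_apply _ _)

lemma hAlg_S : hAlg 𝔽 R p d halg (S (p ^ (d + 1)) 𝔽 (PerfectClosure R p))
    = S (p ^ (d + 1)) 𝔽 R := by
  exact (RingQuot.liftAlgHom_mkAlgHom_apply 𝔽 (FreeAlgebra.lift 𝔽 (fH 𝔽 R p d))
    (h_rel 𝔽 R p d halg) _).trans (FreeAlgebra.lift_ι_apply _ _)

lemma gAlg_psi (k : ℕ) (a : R) :
    gAlg 𝔽 R p d halg (psi (p ^ (d + 1)) 𝔽 R k a)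
      = psi (p ^ (d + 1)) 𝔽 (PerfectClosure R p) k (PerfectClosure.of R p a) := by
  simp only [psi, map_mul, map_pow, gAlg_iota, gAlg_T, gAlg_S]

lemma gAlg_phi (b : PerfectClosure R p) :
    gAlg 𝔽 R p d halg (phi 𝔽 p d b)
      = ι (p ^ (d + 1)) 𝔽 (PerfectClosure R p) b := by
  obtain ⟨⟨n, x⟩, rfl⟩ := PerfectClosure.mk_surjective R p b
  rw [phi_mk, gAlg_psi]
  have key : PerfectClosure.of R p (x ^ p ^ (d * n))
      = PerfectClosure.mk R p (n, x) ^ (p ^ (d + 1)) ^ n := by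
    rw [PerfectClosure.of_apply, PerfectClosure.mk_pow]
    have h1 : (x ^ p ^ (d * n)) ^ p ^ n = x ^ (p ^ (d + 1)) ^ n := by
      simp only [← pow_mul]
      congr 1
      ring
    rw [← mk_shift p n 0 (x ^ p ^ (d * n)), zero_add, h1]
  rw [key, psi_iota]

lemma hg_id (u : Ring' (p ^ (d + 1)) 𝔽 R) :
    hAlg 𝔽 R p d halg (gAlg 𝔽 R p d halg u) = u := by
  have key : ((hAlg 𝔽 R p d halg).comp (gAlg 𝔽 R p d halg)).comp
      (RingQuot.mkAlgHom 𝔽 (Rel (p ^ (d + 1)) 𝔽 R))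
      = RingQuot.mkAlgHom 𝔽 (Rel (p ^ (d + 1)) 𝔽 R) := by
    apply FreeAlgebra.hom_ext
    funext gen
    cases gen with
    | base a =>
      show hAlg 𝔽 R p d halg (gAlg 𝔽 R p d halg (ι (p ^ (d + 1)) 𝔽 R a))
        = ι (p ^ (d + 1)) 𝔽 R a
      rw [gAlg_iota, hAlg_iota, phi_of p d]
    | tau =>
      show hAlg 𝔽 R p d halg (gAlg 𝔽 R p d halg (T (p ^ (d + 1)) 𝔽 R))
        = T (p ^ (d + 1)) 𝔽 R
      rw [gAlg_T, hAlg_T]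
    | sigma =>
      show hAlg 𝔽 R p d halg (gAlg 𝔽 R p d halg (S (p ^ (d + 1)) 𝔽 R))
        = S (p ^ (d + 1)) 𝔽 R
      rw [gAlg_S, hAlg_S]
  obtain ⟨y, rfl⟩ := RingQuot.mkAlgHom_surjective 𝔽 (Rel (p ^ (d + 1)) 𝔽 R) u
  exact DFunLike.congr_fun key y

lemma gh_id (u : Ring' (p ^ (d + 1)) 𝔽 (PerfectClosure R p)) :
    gAlg 𝔽 R p d halg (hAlg 𝔽 R p d halg u) = u := by
  have key : ((gAlg 𝔽 R p d halg).comp (hAlg 𝔽 R p d halg)).comp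
      (RingQuot.mkAlgHom 𝔽 (Rel (p ^ (d + 1)) 𝔽 (PerfectClosure R p)))
      = RingQuot.mkAlgHom 𝔽 (Rel (p ^ (d + 1)) 𝔽 (PerfectClosure R p)) := by
    apply FreeAlgebra.hom_ext
    funext gen
    cases gen with
    | base b =>
      show gAlg 𝔽 R p d halg (hAlg 𝔽 R p d halg
          (ι (p ^ (d + 1)) 𝔽 (PerfectClosure R p) b))
        = ι (p ^ (d + 1)) 𝔽 (PerfectClosure R p) b
      rw [hAlg_iota, gAlg_phi]
    | tau =>
      show gAlg 𝔽 R p d halg (hAlg 𝔽 R p d halg (T (p ^ (d + 1)) 𝔽 (PerfectClosure R p)))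
        = T (p ^ (d + 1)) 𝔽 (PerfectClosure R p)
      rw [hAlg_T, gAlg_T]
    | sigma =>
      show gAlg 𝔽 R p d halg (hAlg 𝔽 R p d halg (S (p ^ (d + 1)) 𝔽 (PerfectClosure R p)))
        = S (p ^ (d + 1)) 𝔽 (PerfectClosure R p)
      rw [hAlg_S, gAlg_S]
  obtain ⟨y, rfl⟩ := RingQuot.mkAlgHom_surjective 𝔽 _ u
  exact DFunLike.congr_fun key y

end Perf

end TwistedLaurent


open TwistedLaurent in
/-- Let `𝔽` be the finite field with `q` elements (`q = p^e`, `p` prime) and `R`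
a commutative `𝔽`-algebra.  The canonical ring homomorphism `R[τ,τ⁻¹] → R^perf[τ,τ⁻¹]` induced by
the canonical map `R → R^perf` to the perfection (perfect closure), sending `τ` to `τ` and `σ` to
`σ`, is bijective, i.e. an isomorphism of rings. -/
theorem stmt_4 (p : ℕ) [Fact p.Prime] (e : ℕ) (he : 0 < e) (q : ℕ) (hq : q = p ^ e)
    (𝔽 : Type) [Field 𝔽] [Fintype 𝔽] (hcard : Fintype.card 𝔽 = q)
    (R : Type) [CommRing R] [Algebra 𝔽 R] [CharP R p] :
    letI : Algebra 𝔽 (PerfectClosure R p) :=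
      ((PerfectClosure.of R p).comp (algebraMap 𝔽 R)).toAlgebra
    ∃ g : Ring' q 𝔽 R →+* Ring' q 𝔽 (PerfectClosure R p),
      (∀ a : R, g (ι q 𝔽 R a) = ι q 𝔽 (PerfectClosure R p) (PerfectClosure.of R p a)) ∧
      g (T q 𝔽 R) = T q 𝔽 (PerfectClosure R p) ∧
      g (S q 𝔽 R) = S q 𝔽 (PerfectClosure R p) ∧
      Function.Bijective g := by
  letI : Algebra 𝔽 (PerfectClosure R p) :=
    ((PerfectClosure.of R p).comp (algebraMap 𝔽 R)).toAlgebra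
  obtain ⟨d, rfl⟩ : ∃ d, e = d + 1 := ⟨e - 1, (Nat.succ_pred_eq_of_pos he).symm⟩
  subst hq
  have halg : ∀ c : 𝔽, algebraMap 𝔽 (PerfectClosure R p) c
      = PerfectClosure.of R p (algebraMap 𝔽 R c) := fun _ => rfl
  refine ⟨(gAlg 𝔽 R p d halg).toRingHom, fun a => gAlg_iota p d halg a,
    gAlg_T p d halg, gAlg_S p d halg, ?_⟩
  exact Function.bijective_iff_has_inverse.mpr
    ⟨hAlg 𝔽 R p d halg, fun x => hg_id p d halg x, fun y => gh_id p d halg y⟩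
end
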